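/- Let γ ≥ 3 be an integer and let T be a tree on n vertices with domination number γ. Then ξ^{ee}(T) ≤ (10n − 3γ − 7)/12, with equality if and only if T is isomorphic to T_{n,γ}. -/

import Mathlib

open SimpleGraph Finset
set_option linter.unusedSectionVars false
set_option linter.unusedVariables false
set_option maxHeartbeats 1600000

variable {V : Type*}

noncomputable def ecc (G : SimpleGraph V) (v : V) : ℕ := ⨆ u : V, G.dist v u

noncomputable def deg (G : SimpleGraph V) (v : V) : ℕ := (G.neighborSet v).ncard

noncomputable def ree {V : Type*} [Fintype V] (G : SimpleGraph V) : ℝ :=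
  letI := Classical.decEq V
  letI := Classical.decRel G.Adj
  ∑ e ∈ G.edgeFinset,
    Sym2.lift ⟨fun u v => 1 / (ecc G u : ℝ) + 1 / (ecc G v : ℝ), fun _ _ => by ring⟩ e

noncomputable def gdiam (G : SimpleGraph V) : ℕ := ⨆ v : V, ecc G v

/-- The domination number of a graph: the minimum size of a dominating set. -/
noncomputable def domNum {W : Type*} (G : SimpleGraph W) : ℕ :=
  sInf {m | ∃ D : Set W, (∀ x : W, x ∈ D ∨ ∃ y ∈ D, G.Adj x y) ∧ D.ncard = m}

/-- The tree `T_{n,β}` (for n ≥ 2β): vertex 0 is the center of a star with n-β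
leaves (vertices 1, …, n-β), and a new pendant vertex is attached to each of the
β-1 leaves 1, …, β-1 (the pendant attached to `i` is vertex `i + (n-β)`). -/
def Tnb (n b : ℕ) : SimpleGraph (Fin n) :=
  SimpleGraph.fromRel (fun x y => (x.val = 0 ∧ 1 ≤ y.val ∧ y.val ≤ n - b) ∨
    (1 ≤ x.val ∧ x.val ≤ b - 1 ∧ y.val = x.val + (n - b)))


section Basics
variable [Fintype V] {G : SimpleGraph V} {u v a b c : V}

lemma dist_le_ecc (v u : V) : G.dist v u ≤ ecc G v :=
  le_ciSup (Set.Finite.bddAbove (Set.finite_range _)) u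

lemma exists_ecc [Nonempty V] (v : V) : ∃ u, ecc G v = G.dist v u := by
  obtain ⟨u, hu⟩ := Finite.exists_max (fun u => G.dist v u)
  exact ⟨u, le_antisymm (ciSup_le hu) (dist_le_ecc v u)⟩

lemma ecc_adj [Nonempty V] (hc : G.Connected) (h : G.Adj u v) : ecc G u ≤ ecc G v + 1 := by
  obtain ⟨x, hx⟩ := exists_ecc (G := G) u
  have h1 : G.dist u x ≤ G.dist u v + G.dist v x := hc.dist_triangle
  have h2 : G.dist u v = 1 := dist_eq_one_iff_adj.2 h
  have h3 : G.dist v x ≤ ecc G v := dist_le_ecc v x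
  omega

lemma walk_not_nil_of_ne {p : G.Walk u v} (h : u ≠ v) : ¬ p.Nil := by
  intro hn
  exact h (SimpleGraph.Walk.Nil.eq hn)

lemma exists_parent (hc : G.Connected) (hvc : v ≠ c) :
    ∃ w, G.Adj v w ∧ G.dist c w + 1 = G.dist c v := by
  obtain ⟨p, hp⟩ := (hc v c).exists_walk_length_eq_dist
  have hnn : ¬ p.Nil := walk_not_nil_of_ne hvc
  refine ⟨p.getVert 1, p.adj_snd hnn, ?_⟩
  have h1 : G.dist (p.getVert 1) c ≤ p.tail.length := dist_le p.tail
  have h2 : p.tail.length + 1 = p.length := SimpleGraph.Walk.length_tail_add_one hnn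
  have h3 : G.dist v c ≤ G.dist v (p.getVert 1) + G.dist (p.getVert 1) c := hc.dist_triangle
  have h4 : G.dist v (p.getVert 1) = 1 := dist_eq_one_iff_adj.2 (p.adj_snd hnn)
  have h5 : G.dist c v = G.dist v c := dist_comm
  have h6 : G.dist c (p.getVert 1) = G.dist (p.getVert 1) c := dist_comm
  omega

lemma dist_getVert_le (hc : G.Connected) (p : G.Walk u v) (i : ℕ) :
    G.dist u (p.getVert i) ≤ i := by
  induction p generalizing i with
  | nil => simp [SimpleGraph.Walk.getVert, SimpleGraph.dist_self]
  | @cons a b' c' h q ih =>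
    match i with
    | 0 => simp [SimpleGraph.Walk.getVert]
    | (i+1) =>
      have h1 : G.dist a ((q.cons h).getVert (i+1)) ≤ G.dist a b' + G.dist b' (q.getVert i) :=
        hc.dist_triangle
      have h2 : G.dist a b' = 1 := dist_eq_one_iff_adj.2 h
      have := ih i
      omega

lemma dist_getVert_end_le (p : G.Walk u v) (i : ℕ) :
    G.dist (p.getVert i) v ≤ p.length - i := by
  induction p generalizing i with
  | nil => simp [SimpleGraph.Walk.getVert, SimpleGraph.dist_self]
  | @cons a b' c' h q ih =>
    match i with
    | 0 =>
      have := dist_le (q.cons h)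
      simpa [SimpleGraph.Walk.getVert] using this
    | (i+1) =>
      have := ih i
      simpa [SimpleGraph.Walk.getVert] using this

lemma geodesic_getVert (hc : G.Connected) (p : G.Walk a b) (hp : p.length = G.dist a b)
    {i : ℕ} (hi : i ≤ p.length) :
    G.dist a (p.getVert i) = i ∧ G.dist (p.getVert i) b = p.length - i := by
  have h1 := dist_getVert_le hc p i
  have h2 := dist_getVert_end_le p i
  have h3 : G.dist a b ≤ G.dist a (p.getVert i) + G.dist (p.getVert i) b := hc.dist_triangle
  omega

end Basics

section Med
variable [Fintype V] [DecidableEq V] {G : SimpleGraph V} {u v a b c x : V}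

lemma getVert_one_takeUntil (p : G.Walk u v) (hx : x ∈ p.support) (hne : x ≠ u) :
    (p.takeUntil x hx).getVert 1 = p.getVert 1 := by
  have hspec := p.take_spec hx
  have hlen : 1 ≤ (p.takeUntil x hx).length := by
    by_contra h
    push_neg at h
    have h0 : (p.takeUntil x hx).length = 0 := by omega
    exact hne (SimpleGraph.Walk.eq_of_length_eq_zero h0).symm
  conv_rhs => rw [← hspec]
  rw [SimpleGraph.Walk.getVert_append]
  split_ifs with h
  · rfl
  · have hlen1 : (p.takeUntil x hx).length = 1 := by omega
    have e1 : (p.takeUntil x hx).getVert 1 = x := by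
      have := (p.takeUntil x hx).getVert_length
      rwa [hlen1] at this
    have e2 : (p.dropUntil x hx).getVert (1 - (p.takeUntil x hx).length) = x := by
      rw [hlen1]
      simp [SimpleGraph.Walk.getVert_zero]
    rw [e1, e2]

lemma share_or_append {p1 : G.Walk v a} {p2 : G.Walk v b}
    (h1 : p1.IsPath) (h2 : p2.IsPath) :
    (p1.reverse.append p2).IsPath ∨ (∃ x, x ∈ p1.support ∧ x ∈ p2.support ∧ x ≠ v) := by
  by_cases hP : (p1.reverse.append p2).IsPath
  · exact Or.inl hP
  · right
    rw [SimpleGraph.Walk.isPath_def, SimpleGraph.Walk.support_append, List.nodup_append] at hP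
    push_neg at hP
    have hn1 : p1.reverse.support.Nodup := h1.reverse.support_nodup
    have hn2 : p2.support.tail.Nodup := by
      have := h2.support_nodup
      exact List.Nodup.of_cons (by rwa [p2.support_eq_cons] at this)
    obtain ⟨x, hx1, hx2⟩ : ∃ x ∈ p1.reverse.support, x ∈ p2.support.tail := by
      obtain ⟨x, hx, y, hy, rfl⟩ := hP hn1 hn2
      exact ⟨x, hx, hy⟩
    refine ⟨x, ?_, ?_, ?_⟩
    · rwa [SimpleGraph.Walk.support_reverse, List.mem_reverse] at hx1
    · exact List.mem_of_mem_tail hx2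
    · intro hxv
      subst hxv
      have := h2.support_nodup
      rw [p2.support_eq_cons] at this
      exact (List.nodup_cons.1 this).1 hx2
end Med

section Med2
variable [Fintype V] [DecidableEq V] {G : SimpleGraph V} {a b v : V}

lemma tree_median (hT : G.IsTree) (a b : V) :
    ∀ (k : ℕ) (v : V), G.dist v a ≤ k →
    ∃ m, G.dist a m + G.dist m b = G.dist a b ∧
         G.dist a v = G.dist a m + G.dist m v ∧
         G.dist v b = G.dist v m + G.dist m b := by
  have hc := hT.isConnected
  intro k
  induction k with
  | zero =>
    intro v hv
    have hva : v = a := (hc.dist_eq_zero_iff).1 (Nat.le_zero.1 hv)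
    subst hva
    exact ⟨v, by simp [SimpleGraph.dist_self]⟩
  | succ k ih =>
    intro v hv
    by_cases hbase : G.dist a v + G.dist v b = G.dist a b
    · exact ⟨v, by simp [SimpleGraph.dist_self, hbase]⟩
    have hva : v ≠ a := by
      rintro rfl
      simp [SimpleGraph.dist_self] at hbase
    have hvb : v ≠ b := by
      rintro rfl
      simp [SimpleGraph.dist_self] at hbase
    obtain ⟨p1, hp1P, hp1⟩ := hc.exists_path_of_dist v a
    obtain ⟨p2, hp2P, hp2⟩ := hc.exists_path_of_dist v b
    have hn1 : ¬ p1.Nil := fun hn => hva (SimpleGraph.Walk.Nil.eq hn)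
    have hn2 : ¬ p2.Nil := fun hn => hvb (SimpleGraph.Walk.Nil.eq hn)
    have hl1 : 0 < p1.length := SimpleGraph.Walk.not_nil_iff_lt_length.1 hn1
    have hl2 : 0 < p2.length := SimpleGraph.Walk.not_nil_iff_lt_length.1 hn2
    rcases share_or_append hp1P hp2P with hQ | ⟨x, hx1, hx2, hxv⟩
    · -- appended path contradicts hbase via uniqueness of paths in a tree
      exfalso
      obtain ⟨p0, hp0P, hp0⟩ := hc.exists_path_of_dist a b
      have := (hT.existsUnique_path a b).unique hQ hp0P
      apply hbase
      have hlen : (p1.reverse.append p2).length = p0.length := by rw [this]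
      rw [SimpleGraph.Walk.length_append, SimpleGraph.Walk.length_reverse] at hlen
      rw [hp0] at hlen
      rw [SimpleGraph.dist_comm (u := a) (v := v), ← hp1, ← hp2]
      exact hlen
    · -- shared vertex: first steps agree
      have hEq : p1.takeUntil x hx1 = p2.takeUntil x hx2 :=
        (hT.existsUnique_path v x).unique (hp1P.takeUntil hx1) (hp2P.takeUntil hx2)
      have hw : p1.getVert 1 = p2.getVert 1 := by
        rw [← getVert_one_takeUntil p1 hx1 hxv, ← getVert_one_takeUntil p2 hx2 hxv, hEq]
      set w := p1.getVert 1 with hwdef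
      have hg1 := geodesic_getVert hc p1 hp1 (i := 1) (by omega)
      have hg2 := geodesic_getVert hc p2 hp2 (i := 1) (by omega)
      rw [← hw] at hg2
      have hwa : G.dist w a = G.dist v a - 1 := by rw [← hp1]; exact hg1.2
      have hwb : G.dist w b = G.dist v b - 1 := by rw [← hp2]; exact hg2.2
      have hvw : G.dist v w = 1 := hg1.1
      obtain ⟨m, hm1, hm2, hm3⟩ := ih w (by omega)
      refine ⟨m, hm1, ?_, ?_⟩
      · -- G.dist a v = G.dist a m + G.dist m v
        have t1 : G.dist m v ≤ G.dist m w + G.dist w v := hc.dist_triangle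
        have t2 : G.dist a v ≤ G.dist a m + G.dist m v := hc.dist_triangle
        have t3 : G.dist a w ≤ G.dist a v + G.dist v w := hc.dist_triangle
        have c1 : G.dist a v = G.dist v a := SimpleGraph.dist_comm
        have c2 : G.dist a w = G.dist w a := SimpleGraph.dist_comm
        have c3 : G.dist w v = G.dist v w := SimpleGraph.dist_comm
        have c4 : G.dist m w = G.dist w m := SimpleGraph.dist_comm
        omega
      · -- G.dist v b = G.dist v m + G.dist m b
        have t1 : G.dist m v ≤ G.dist m w + G.dist w v := hc.dist_triangle
        have t2 : G.dist a v ≤ G.dist a m + G.dist m v := hc.dist_triangle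
        have t3 : G.dist v b ≤ G.dist v w + G.dist w b := hc.dist_triangle
        have t4 : G.dist w b ≤ G.dist w v + G.dist v b := hc.dist_triangle
        have t5 : G.dist v m ≤ G.dist v w + G.dist w m := hc.dist_triangle
        have t6 : G.dist a v ≥ G.dist a w - G.dist v w := by
          have : G.dist a w ≤ G.dist a v + G.dist v w := hc.dist_triangle
          omega
        have c1 : G.dist a v = G.dist v a := SimpleGraph.dist_comm
        have c2 : G.dist a w = G.dist w a := SimpleGraph.dist_comm
        have c3 : G.dist w v = G.dist v w := SimpleGraph.dist_comm
        have c4 : G.dist m w = G.dist w m := SimpleGraph.dist_comm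
        have c5 : G.dist m v = G.dist v m := SimpleGraph.dist_comm
        omega
end Med2

section OnPath
variable [Fintype V] [DecidableEq V] {G : SimpleGraph V} {a b m : V}

lemma onpath (hT : G.IsTree) {W : G.Walk a b} (hW : W.length = G.dist a b)
    (hm : G.dist a m + G.dist m b = G.dist a b) :
    W.getVert (G.dist a m) = m := by
  have hc := hT.isConnected
  obtain ⟨p, hpP, hp⟩ := hc.exists_path_of_dist a m
  obtain ⟨q, hqP, hq⟩ := hc.exists_path_of_dist m b
  have hQlen : (p.append q).length = G.dist a b := by
    rw [SimpleGraph.Walk.length_append]; omega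
  have hQP : (p.append q).IsPath := SimpleGraph.Walk.isPath_of_length_eq_dist _ hQlen
  have hWP : W.IsPath := W.isPath_of_length_eq_dist hW
  have hEq : p.append q = W := (hT.existsUnique_path a b).unique hQP hWP
  have hgv : (p.append q).getVert p.length = m := by
    rw [SimpleGraph.Walk.getVert_append]
    simp [SimpleGraph.Walk.getVert_zero]
  rw [hEq] at hgv
  rw [← hp]
  exact hgv
end OnPath

section Dom
variable [Fintype V] {G : SimpleGraph V}

lemma domNum_le_card (D : Set V) (hD : ∀ x, x ∈ D ∨ ∃ y ∈ D, G.Adj x y) :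
    domNum G ≤ D.ncard :=
  Nat.sInf_le ⟨D, hD, rfl⟩

lemma domNum_le_fincard : domNum G ≤ Fintype.card V := by
  have := domNum_le_card (G := G) Set.univ (fun x => Or.inl trivial)
  rwa [Set.ncard_univ, Nat.card_eq_fintype_card] at this

lemma exists_neighbor (hc : G.Connected) (h2 : 1 < Fintype.card V) (v : V) :
    ∃ u, G.Adj v u := by
  have : Nontrivial V := Fintype.one_lt_card_iff_nontrivial.1 h2
  obtain ⟨u, hu⟩ := exists_ne v
  obtain ⟨p, hp⟩ := (hc v u).exists_walk_length_eq_dist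
  have hn : ¬ p.Nil := by
    intro h
    exact (Ne.symm hu) (SimpleGraph.Walk.Nil.eq h)
  exact ⟨p.getVert 1, p.adj_snd hn⟩

lemma ore (hc : G.Connected) (h2 : 1 < Fintype.card V) :
    2 * domNum G ≤ Fintype.card V := by
  have hne : Nonempty V := hc.nonempty
  have hmem : domNum G ∈ {m | ∃ D : Set V, (∀ x : V, x ∈ D ∨ ∃ y ∈ D, G.Adj x y) ∧ D.ncard = m} := by
    apply Nat.sInf_mem
    exact ⟨Fintype.card V, Set.univ, fun x => Or.inl trivial, by
      rw [Set.ncard_univ, Nat.card_eq_fintype_card]⟩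
  obtain ⟨D, hD, hcard⟩ := hmem
  have hDpos : 1 ≤ D.ncard := by
    rcases Nat.eq_zero_or_pos D.ncard with h0 | h1
    · exfalso
      have hDe : D = ∅ := (Set.ncard_eq_zero D.toFinite).1 h0
      obtain ⟨x⟩ := hne
      rcases hD x with hx | ⟨y, hy, _⟩
      · rw [hDe] at hx; exact hx
      · rw [hDe] at hy; exact hy
    · omega
  have hstep : ∀ v ∈ D, ∃ u, u ∉ D ∧ G.Adj v u := by
    intro v hv
    by_contra hcon
    push_neg at hcon
    have hdom' : ∀ x : V, x ∈ D \ {v} ∨ ∃ y ∈ D \ {v}, G.Adj x y := by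
      intro x
      by_cases hxv : x = v
      · subst hxv
        obtain ⟨u, hu⟩ := exists_neighbor hc h2 x
        have huD : u ∈ D := by
          by_contra h
          exact hcon u h hu
        right
        refine ⟨u, ⟨huD, ?_⟩, hu⟩
        intro he
        simp only [Set.mem_singleton_iff] at he
        exact G.ne_of_adj hu.symm he
      · by_cases hxD : x ∈ D
        · exact Or.inl ⟨hxD, hxv⟩
        · rcases hD x with hx | ⟨y, hy, hxy⟩
          · exact absurd hx hxD
          · by_cases hyv : y = v
            · subst hyv
              exact (hcon x hxD hxy.symm).elim
            · exact Or.inr ⟨y, ⟨hy, hyv⟩, hxy⟩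
    have := domNum_le_card (G := G) (D \ {v}) hdom'
    rw [Set.ncard_diff_singleton_of_mem hv] at this
    omega
  have hcompl : ∀ x : V, x ∈ Dᶜ ∨ ∃ y ∈ Dᶜ, G.Adj x y := by
    intro x
    by_cases hx : x ∈ D
    · obtain ⟨u, huD, hadj⟩ := hstep x hx
      exact Or.inr ⟨u, huD, hadj⟩
    · exact Or.inl hx
  have h1 := domNum_le_card (G := G) Dᶜ hcompl
  have h3 : D.ncard + Dᶜ.ncard = Fintype.card V := by
    rw [Set.ncard_add_ncard_compl]
    exact Nat.card_eq_fintype_card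
  omega
end Dom

section EdgeSum
variable [Fintype V] {G : SimpleGraph V}

lemma ree_eq (G : SimpleGraph V) [Fintype G.edgeSet] :
    ree G = ∑ e ∈ G.edgeFinset,
      Sym2.lift ⟨fun u v => 1 / (ecc G u : ℝ) + 1 / (ecc G v : ℝ), fun _ _ => by ring⟩ e := by
  unfold ree
  congr 1
  exact congrArg (fun i => @edgeFinset V G i) (Subsingleton.elim _ _)

lemma edge_decomp [DecidableEq V] [Fintype G.edgeSet] (hT : G.IsTree) (c : V) (par : V → V)
    (hpar : ∀ v, v ≠ c → G.Adj v (par v) ∧ G.dist c (par v) + 1 = G.dist c v) :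
    G.edgeFinset = (Finset.univ.erase c).image (fun v => s(v, par v)) := by
  have hinj : ∀ x ∈ Finset.univ.erase c, ∀ y ∈ Finset.univ.erase c,
      (fun v => s(v, par v)) x = (fun v => s(v, par v)) y → x = y := by
    intro x hx y hy hxy
    simp only [Sym2.eq, Sym2.rel_iff', Prod.mk.injEq, Prod.swap_prod_mk] at hxy
    rcases hxy with ⟨h1, _⟩ | ⟨h1, h2⟩
    · exact h1
    · exfalso
      have hx' := (hpar x (Finset.ne_of_mem_erase hx)).2
      have hy' := (hpar y (Finset.ne_of_mem_erase hy)).2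
      rw [h2] at hx'
      rw [← h1] at hy'
      omega
  symm
  apply Finset.eq_of_subset_of_card_le
  · intro e he
    simp only [Finset.mem_image] at he
    obtain ⟨v, hv, rfl⟩ := he
    rw [mem_edgeFinset, mem_edgeSet]
    exact (hpar v (Finset.ne_of_mem_erase hv)).1
  · rw [Finset.card_image_of_injOn hinj]
    have h1 := hT.card_edgeFinset
    have h2 : (Finset.univ.erase c).card = Fintype.card V - 1 := by
      rw [Finset.card_erase_of_mem (Finset.mem_univ c), Finset.card_univ]
    omega

lemma ree_eq_sum [DecidableEq V] [Fintype G.edgeSet] (hT : G.IsTree) (c : V) (par : V → V)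
    (hpar : ∀ v, v ≠ c → G.Adj v (par v) ∧ G.dist c (par v) + 1 = G.dist c v) :
    ree G = ∑ v ∈ Finset.univ.erase c, (1 / (ecc G v : ℝ) + 1 / (ecc G (par v) : ℝ)) := by
  rw [ree_eq, edge_decomp hT c par hpar, Finset.sum_image ?hinj]
  case hinj =>
    intro x hx y hy hxy
    simp only [Sym2.eq, Sym2.rel_iff', Prod.mk.injEq, Prod.swap_prod_mk] at hxy
    rcases hxy with ⟨h1, _⟩ | ⟨h1, h2⟩
    · exact h1
    · exfalso
      have hx' := (hpar x (Finset.ne_of_mem_erase hx)).2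
      have hy' := (hpar y (Finset.ne_of_mem_erase hy)).2
      rw [h2] at hx'
      rw [← h1] at hy'
      omega
  apply Finset.sum_congr rfl
  intro v _
  rw [Sym2.lift_mk]
end EdgeSum

section Geom
variable [Fintype V] [DecidableEq V] {G : SimpleGraph V} {a b v : V}


lemma median_path (hT : G.IsTree) {W : G.Walk a b} (hW : W.length = G.dist a b) (v : V) :
    ∃ m i, W.getVert i = m ∧ i + G.dist m b = G.dist a b ∧ G.dist a m = i ∧
      G.dist a v = i + G.dist m v ∧ G.dist v b = G.dist m v + G.dist m b := by
  obtain ⟨m, hm1, hm2, hm3⟩ := tree_median hT a b (G.dist v a) v le_rfl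
  refine ⟨m, G.dist a m, onpath hT hW hm1, hm1, rfl, hm2, ?_⟩
  have : G.dist v m = G.dist m v := SimpleGraph.dist_comm
  omega

lemma ecc_dists (v : V) : G.dist a v ≤ ecc G v ∧ G.dist v b ≤ ecc G v := by
  constructor
  · rw [SimpleGraph.dist_comm]; exact dist_le_ecc v a
  · exact dist_le_ecc v b

lemma even_geom (hT : G.IsTree) {W : G.Walk a b} (hW : W.length = G.dist a b)
    {r1 : ℕ} (hd2 : G.dist a b = 2*r1) :
    (∀ v, ecc G v ≤ r1 → v = W.getVert r1) ∧
    (∀ v, ecc G v ≤ r1 + 1 → v = W.getVert r1 ∨ G.Adj (W.getVert r1) v) := by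
  have hc := hT.isConnected
  constructor
  · intro v hv
    obtain ⟨m, i, hgv, h1, h2, h3, h4⟩ := median_path hT hW v
    obtain ⟨ha', hb'⟩ := ecc_dists (G := G) (a := a) (b := b) v
    have ht0 : G.dist m v = 0 := by omega
    have hmv : m = v := hc.dist_eq_zero_iff.1 ht0
    have hir : i = r1 := by omega
    rw [← hmv, ← hgv, hir]
  · intro v hv
    obtain ⟨m, i, hgv, h1, h2, h3, h4⟩ := median_path hT hW v
    obtain ⟨ha', hb'⟩ := ecc_dists (G := G) (a := a) (b := b) v
    have ht1 : G.dist m v ≤ 1 := by omega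
    rcases Nat.le_one_iff_eq_zero_or_eq_one.1 ht1 with ht0 | ht1
    · -- v = m on the path, index i with r1-1 ≤ i ≤ r1+1
      have hmv : m = v := hc.dist_eq_zero_iff.1 ht0
      subst hmv
      rcases Nat.lt_trichotomy i r1 with hlt | heq | hgt
      · have hieq : i + 1 = r1 := by omega
        right
        have hadj : G.Adj (W.getVert i) (W.getVert (i+1)) :=
          W.adj_getVert_succ (by omega)
        rw [hieq] at hadj
        rw [← hgv]
        exact hadj.symm
      · left; rw [← hgv, heq]
      · have hieq : i = r1 + 1 := by omega
        right
        have hadj : G.Adj (W.getVert r1) (W.getVert (r1+1)) :=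
          W.adj_getVert_succ (by omega)
        rw [← hgv, hieq]
        exact hadj
    · -- dist m v = 1, m must be the center
      have hir : i = r1 := by omega
      right
      have hthis : G.Adj m v := SimpleGraph.dist_eq_one_iff_adj.1 ht1
      rw [← hgv, hir] at hthis
      exact hthis

lemma odd_geom (hT : G.IsTree) {W : G.Walk a b} (hW : W.length = G.dist a b)
    {r1 : ℕ} (hd2 : G.dist a b = 2*r1 + 1) :
    (∀ v, ecc G v ≤ r1 + 1 → v = W.getVert r1 ∨ v = W.getVert (r1+1)) ∧
    (∀ v, ecc G v ≤ r1 + 2 → (v = W.getVert r1 ∨ v = W.getVert (r1+1)) ∨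
      (G.Adj (W.getVert r1) v ∨ G.Adj (W.getVert (r1+1)) v)) := by
  have hc := hT.isConnected
  constructor
  · intro v hv
    obtain ⟨m, i, hgv, h1, h2, h3, h4⟩ := median_path hT hW v
    obtain ⟨ha', hb'⟩ := ecc_dists (G := G) (a := a) (b := b) v
    have ht0 : G.dist m v = 0 := by omega
    have hmv : m = v := hc.dist_eq_zero_iff.1 ht0
    subst hmv
    rcases Nat.lt_or_ge i (r1+1) with hlt | hge
    · left; rw [← hgv]; congr 1; omega
    · right; rw [← hgv]; congr 1; omega
  · intro v hv
    obtain ⟨m, i, hgv, h1, h2, h3, h4⟩ := median_path hT hW v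
    obtain ⟨ha', hb'⟩ := ecc_dists (G := G) (a := a) (b := b) v
    have ht1 : G.dist m v ≤ 1 := by omega
    rcases Nat.le_one_iff_eq_zero_or_eq_one.1 ht1 with ht0 | ht1
    · have hmv : m = v := hc.dist_eq_zero_iff.1 ht0
      subst hmv
      have hi : r1 ≤ i + 1 ∧ i ≤ r1 + 2 := by omega
      rcases Nat.lt_trichotomy i r1 with hlt | heq | hgt
      · have hieq : i + 1 = r1 := by omega
        right; left
        have hadj : G.Adj (W.getVert i) (W.getVert (i+1)) := W.adj_getVert_succ (by omega)
        rw [hieq] at hadj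
        rw [← hgv]
        exact hadj.symm
      · left; left; rw [← hgv, heq]
      · rcases Nat.lt_or_ge i (r1+2) with hlt2 | hge2
        · left; right; rw [← hgv]; congr 1; omega
        · have hieq : i = r1 + 2 := by omega
          right; right
          have hadj : G.Adj (W.getVert (r1+1)) (W.getVert (r1+2)) :=
            W.adj_getVert_succ (by omega)
          rw [← hgv, hieq]
          exact hadj
    · have : G.Adj m v := SimpleGraph.dist_eq_one_iff_adj.1 ht1
      rcases Nat.lt_or_ge i (r1+1) with hlt | hge
      · right; left
        have hir : i = r1 := by omega
        rw [← hgv, hir] at this; exact this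
      · right; right
        have hir : i = r1 + 1 := by omega
        rw [← hgv, hir] at this; exact this
end Geom


section Main
variable {n g : ℕ} {T : SimpleGraph (Fin n)}

lemma build_iso (hg : 3 ≤ g) (hn : 2*g ≤ n)
    (c : Fin n) (par : Fin n → Fin n) (A B : Finset (Fin n))
    (hAB : Finset.univ.erase c = A ∪ B) (hABd : Disjoint A B)
    (hAcard : A.card = n - g) (hBcard : B.card = g - 1)
    (hparA : ∀ v ∈ A, par v = c)
    (hparB : ∀ v ∈ B, par v ∈ A)
    (hinj : Set.InjOn par ↑B)
    (hadj : ∀ x y, T.Adj x y ↔ ∃ v ∈ Finset.univ.erase c, s(v, par v) = s(x, y)) :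
    Nonempty (T ≃g Tnb n g) := by
  classical
  have hBsub : B ⊆ Finset.univ.erase c := by rw [hAB]; exact Finset.subset_union_right
  have hAsub : A ⊆ Finset.univ.erase c := by rw [hAB]; exact Finset.subset_union_left
  set S : Finset (Fin n) := B.image par with hSdef
  have hScard : S.card = g - 1 := by rw [hSdef, Finset.card_image_of_injOn hinj, hBcard]
  have hSsubA : S ⊆ A := by
    intro y hy
    obtain ⟨v, hv, rfl⟩ := Finset.mem_image.1 hy
    exact hparB v hv
  set A' : Finset (Fin n) := A \ S with hA'def
  have hA'card : A'.card = n - 2*g + 1 := by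
    rw [hA'def, Finset.card_sdiff_of_subset hSsubA, hAcard, hScard]
    omega
  have eB : (↑B : Type) ≃ Fin (g-1) :=
    Fintype.equivFinOfCardEq (by rw [Fintype.card_coe, hBcard])
  have eA' : (↑A' : Type) ≃ Fin (n - 2*g + 1) :=
    Fintype.equivFinOfCardEq (by rw [Fintype.card_coe, hA'card])
  have hparmem : ∀ x : ↑B, par x.1 ∈ S := fun x => Finset.mem_image_of_mem par x.2
  have hparE_bij : Function.Bijective (fun x : ↑B => (⟨par x.1, hparmem x⟩ : ↑S)) := by
    constructor
    · intro x y hxy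
      apply Subtype.ext
      exact hinj x.2 y.2 (congrArg Subtype.val hxy)
    · rintro ⟨y, hy⟩
      obtain ⟨v, hv, rfl⟩ := Finset.mem_image.1 hy
      exact ⟨⟨v, hv⟩, rfl⟩
  set pE : (↑B : Type) ≃ ↑S := Equiv.ofBijective _ hparE_bij with hpEdef
  have hpE_par : ∀ x : ↑B, (pE x).val = par x.val := fun x => rfl
  -- the vertex relabelling
  set ψv : Fin n → ℕ := fun v =>
    if hv : v ∈ B then n - g + 1 + (eB ⟨v, hv⟩).val
    else if hv : v ∈ S then 1 + (eB (pE.symm ⟨v, hv⟩)).val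
    else if hv : v ∈ A' then g + (eA' ⟨v, hv⟩).val
    else 0 with hψvdef
  -- membership exclusions
  have hBc : ∀ v ∈ B, v ≠ c := fun v hv => Finset.ne_of_mem_erase (hBsub hv)
  have hSc : ∀ v ∈ S, v ≠ c := fun v hv => Finset.ne_of_mem_erase (hAsub (hSsubA hv))
  have hA'c : ∀ v ∈ A', v ≠ c := fun v hv =>
    Finset.ne_of_mem_erase (hAsub (Finset.mem_sdiff.1 hv).1)
  have hSB : ∀ v ∈ S, v ∉ B := fun v hv => Finset.disjoint_left.1 hABd (hSsubA hv)
  have hA'B : ∀ v ∈ A', v ∉ B := fun v hv =>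
    Finset.disjoint_left.1 hABd (Finset.mem_sdiff.1 hv).1
  have hA'S : ∀ v ∈ A', v ∉ S := fun v hv => (Finset.mem_sdiff.1 hv).2
  have hcB : c ∉ B := fun h => hBc c h rfl
  have hcS : c ∉ S := fun h => hSc c h rfl
  have hcA' : c ∉ A' := fun h => hA'c c h rfl
  -- values on each class
  have hvc : ψv c = 0 := by
    simp only [hψvdef]
    rw [dif_neg hcB, dif_neg hcS, dif_neg hcA']
  have hvB : ∀ v (hv : v ∈ B), ψv v = n - g + 1 + (eB ⟨v, hv⟩).val := by
    intro v hv
    simp only [hψvdef]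
    rw [dif_pos hv]
  have hvS : ∀ v (hv : v ∈ S), ψv v = 1 + (eB (pE.symm ⟨v, hv⟩)).val := by
    intro v hv
    simp only [hψvdef]
    rw [dif_neg (hSB v hv), dif_pos hv]
  have hvA' : ∀ v (hv : v ∈ A'), ψv v = g + (eA' ⟨v, hv⟩).val := by
    intro v hv
    simp only [hψvdef]
    rw [dif_neg (hA'B v hv), dif_neg (hA'S v hv), dif_pos hv]
  have heBlt : ∀ z : ↑B, (eB z).val ≤ g - 2 := by
    intro z
    have := (eB z).isLt
    omega
  have heA'lt : ∀ z : ↑A', (eA' z).val ≤ n - 2*g := by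
    intro z
    have := (eA' z).isLt
    omega
  -- master range/classification lemma
  have hrange : ∀ v : Fin n,
      (v = c ∧ ψv v = 0) ∨ (v ∈ B ∧ n - g + 1 ≤ ψv v ∧ ψv v ≤ n - 1) ∨
      (v ∈ S ∧ 1 ≤ ψv v ∧ ψv v ≤ g - 1) ∨ (v ∈ A' ∧ g ≤ ψv v ∧ ψv v ≤ n - g) := by
    intro v
    by_cases h1 : v ∈ B
    · right; left
      refine ⟨h1, ?_, ?_⟩ <;> rw [hvB v h1] <;> have := heBlt ⟨v, h1⟩ <;> omega
    by_cases h2 : v ∈ S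
    · right; right; left
      refine ⟨h2, ?_, ?_⟩ <;> rw [hvS v h2] <;> have := heBlt (pE.symm ⟨v, h2⟩) <;> omega
    by_cases h3 : v ∈ A'
    · right; right; right
      refine ⟨h3, ?_, ?_⟩ <;> rw [hvA' v h3] <;> have := heA'lt ⟨v, h3⟩ <;> omega
    · left
      have hvcc : v = c := by
        by_contra hne
        have hmem : v ∈ A ∪ B := by
          rw [← hAB]
          exact Finset.mem_erase.2 ⟨hne, Finset.mem_univ v⟩
        rcases Finset.mem_union.1 hmem with hA | hB
        · rcases Finset.mem_sdiff.2 ⟨hA, h2⟩ with h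
          exact h3 h
        · exact h1 hB
      subst hvcc
      exact ⟨rfl, hvc⟩
  have hψlt : ∀ v, ψv v < n := by
    intro v
    rcases hrange v with ⟨_, h⟩ | ⟨_, _, h⟩ | ⟨_, _, h⟩ | ⟨_, _, h⟩ <;> omega
  set ψ : Fin n → Fin n := fun v => ⟨ψv v, hψlt v⟩ with hψdef
  have hψval : ∀ v, (ψ v).val = ψv v := fun v => rfl
  -- injectivity
  have hψinj : Function.Injective ψ := by
    intro x y hxy
    have hval : ψv x = ψv y := congrArg Fin.val hxy
    rcases hrange x with ⟨hx, hx0⟩ | ⟨hx, hx1, hx2⟩ | ⟨hx, hx1, hx2⟩ | ⟨hx, hx1, hx2⟩ <;>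
      rcases hrange y with ⟨hy, hy0⟩ | ⟨hy, hy1, hy2⟩ | ⟨hy, hy1, hy2⟩ | ⟨hy, hy1, hy2⟩
    · rw [hx, hy]
    · omega
    · omega
    · omega
    · omega
    · -- both in B
      rw [hvB x hx, hvB y hy] at hval
      have : eB ⟨x, hx⟩ = eB ⟨y, hy⟩ := Fin.ext (by omega)
      have := eB.injective this
      exact congrArg Subtype.val this
    · omega
    · omega
    · omega
    · omega
    · -- both in S
      rw [hvS x hx, hvS y hy] at hval
      have h5 : eB (pE.symm ⟨x, hx⟩) = eB (pE.symm ⟨y, hy⟩) := Fin.ext (by omega)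
      have h6 := pE.symm.injective (eB.injective h5)
      exact congrArg Subtype.val h6
    · omega
    · omega
    · omega
    · omega
    · -- both in A'
      rw [hvA' x hx, hvA' y hy] at hval
      have h5 : eA' ⟨x, hx⟩ = eA' ⟨y, hy⟩ := Fin.ext (by omega)
      have h6 := eA'.injective h5
      exact congrArg Subtype.val h6
  have hbij : Function.Bijective ψ := Finite.injective_iff_bijective.1 hψinj
  -- Tnb adjacency in arithmetic form
  have htnb : ∀ u v : Fin n, (Tnb n g).Adj u v ↔
      ((u.val = 0 ∧ 1 ≤ v.val ∧ v.val ≤ n - g) ∨ (v.val = 0 ∧ 1 ≤ u.val ∧ u.val ≤ n - g) ∨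
       (1 ≤ u.val ∧ u.val ≤ g - 1 ∧ v.val = u.val + (n-g)) ∨
       (1 ≤ v.val ∧ v.val ≤ g - 1 ∧ u.val = v.val + (n-g))) := by
    intro u v
    rw [Tnb, SimpleGraph.fromRel_adj, ne_eq, Fin.ext_iff]
    omega
  -- key adjacency images
  have hψc : (ψ c).val = 0 := hvc
  have hkey : ∀ v ∈ Finset.univ.erase c, (Tnb n g).Adj (ψ v) (ψ (par v)) := by
    intro v hv
    rw [htnb]
    have hvAB : v ∈ A ∪ B := by rw [← hAB]; exact hv
    rcases Finset.mem_union.1 hvAB with hA | hB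
    · -- v ∈ A : edge to the centre
      have hpc : par v = c := hparA v hA
      rw [hpc, hψval, hψval, hvc]
      right; left
      refine ⟨rfl, ?_, ?_⟩ <;>
        rcases hrange v with ⟨h, _⟩ | ⟨h, h1, h2⟩ | ⟨h, h1, h2⟩ | ⟨h, h1, h2⟩
      · exact absurd h (Finset.ne_of_mem_erase hv)
      · exact absurd hA (Finset.disjoint_left.1 hABd.symm h)
      · omega
      · omega
      · exact absurd h (Finset.ne_of_mem_erase hv)
      · exact absurd hA (Finset.disjoint_left.1 hABd.symm h)
      · omega
      · omega
    · -- v ∈ B : pendant edge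
      have hpS : par v ∈ S := Finset.mem_image_of_mem par hB
      have hsymmeq : pE.symm ⟨par v, hpS⟩ = ⟨v, hB⟩ := by
        apply pE.injective
        rw [Equiv.apply_symm_apply]
        apply Subtype.ext
        rw [hpE_par]
      right; right; right
      rw [hψval, hψval, hvB v hB, hvS (par v) hpS, hsymmeq]
      have := heBlt ⟨v, hB⟩
      refine ⟨by omega, by omega, by omega⟩
  refine ⟨⟨Equiv.ofBijective ψ hbij, ?_⟩⟩
  intro x y
  show (Tnb n g).Adj (ψ x) (ψ y) ↔ T.Adj x y
  constructor
  · -- backward: Tnb adjacency implies T adjacency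
    intro h
    rw [htnb] at h
    rw [hψval, hψval] at h
    rw [hadj]
    rcases h with ⟨h1, h2, h3⟩ | ⟨h1, h2, h3⟩ | ⟨h1, h2, h3⟩ | ⟨h1, h2, h3⟩
    · -- x = c, y ∈ A
      have hxc : x = c := by
        rcases hrange x with ⟨h, _⟩ | ⟨_, _, _⟩ | ⟨_, _, _⟩ | ⟨_, _, _⟩
        · exact h
        all_goals omega
      have hyA : y ∈ A := by
        rcases hrange y with ⟨_, _⟩ | ⟨_, _, _⟩ | ⟨hS, _, _⟩ | ⟨hA', _, _⟩
        · omega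
        · omega
        · exact hSsubA hS
        · exact (Finset.mem_sdiff.1 hA').1
      refine ⟨y, hAsub hyA, ?_⟩
      rw [hparA y hyA, hxc]
      exact Sym2.eq_swap
    · -- y = c, x ∈ A
      have hyc : y = c := by
        rcases hrange y with ⟨h, _⟩ | ⟨_, _, _⟩ | ⟨_, _, _⟩ | ⟨_, _, _⟩
        · exact h
        all_goals omega
      have hxA : x ∈ A := by
        rcases hrange x with ⟨_, _⟩ | ⟨_, _, _⟩ | ⟨hS, _, _⟩ | ⟨hA', _, _⟩
        · omega
        · omega
        · exact hSsubA hS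
        · exact (Finset.mem_sdiff.1 hA').1
      refine ⟨x, hAsub hxA, ?_⟩
      rw [hparA x hxA, hyc]
    · -- x ∈ S support, y its pendant in B
      have hxS : x ∈ S := by
        rcases hrange x with ⟨_, h0⟩ | ⟨_, _, _⟩ | ⟨hS, _, _⟩ | ⟨_, _, _⟩
        · omega
        · omega
        · exact hS
        · omega
      have hyB : y ∈ B := by
        rw [hvS x hxS] at h3
        have := heBlt (pE.symm ⟨x, hxS⟩)
        rcases hrange y with ⟨_, _⟩ | ⟨hB', _, _⟩ | ⟨_, _, _⟩ | ⟨_, _, _⟩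
        · omega
        · exact hB'
        · omega
        · omega
      -- identify y with the preimage of x
      have hyeq : (⟨y, hyB⟩ : ↑B) = pE.symm ⟨x, hxS⟩ := by
        apply eB.injective
        apply Fin.ext
        rw [hvS x hxS, hvB y hyB] at h3
        omega
      have hpar_y : par y = x := by
        have h5 : pE ⟨y, hyB⟩ = ⟨x, hxS⟩ := by rw [hyeq, Equiv.apply_symm_apply]
        have h6 := congrArg Subtype.val h5
        rw [hpE_par] at h6
        exact h6
      refine ⟨y, hBsub hyB, ?_⟩
      rw [hpar_y]
      exact Sym2.eq_swap
    · -- y ∈ S support, x its pendant in B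
      have hyS : y ∈ S := by
        rcases hrange y with ⟨_, h0⟩ | ⟨_, _, _⟩ | ⟨hS, _, _⟩ | ⟨_, _, _⟩
        · omega
        · omega
        · exact hS
        · omega
      have hxB : x ∈ B := by
        rw [hvS y hyS] at h3
        have := heBlt (pE.symm ⟨y, hyS⟩)
        rcases hrange x with ⟨_, _⟩ | ⟨hB', _, _⟩ | ⟨_, _, _⟩ | ⟨_, _, _⟩
        · omega
        · exact hB'
        · omega
        · omega
      have hxeq : (⟨x, hxB⟩ : ↑B) = pE.symm ⟨y, hyS⟩ := by
        apply eB.injective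
        apply Fin.ext
        rw [hvS y hyS, hvB x hxB] at h3
        omega
      have hpar_x : par x = y := by
        have h5 : pE ⟨x, hxB⟩ = ⟨y, hyS⟩ := by rw [hxeq, Equiv.apply_symm_apply]
        have h6 := congrArg Subtype.val h5
        rw [hpE_par] at h6
        exact h6
      refine ⟨x, hBsub hxB, ?_⟩
      rw [hpar_x]
  · -- forward: T adjacency implies Tnb adjacency
    intro h
    obtain ⟨v, hv, hveq⟩ := (hadj x y).1 h
    have hk := hkey v hv
    rw [Sym2.eq_iff] at hveq
    rcases hveq with ⟨rfl, rfl⟩ | ⟨hvy, hvx⟩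
    · exact hk
    · rw [← hvy, ← hvx]
      exact hk.symm

lemma even_case {r1 : ℕ} (hg : 3 ≤ g) (hr1 : 2 ≤ r1)
    (hT : T.IsTree) (hd : domNum T = g)
    {a b : Fin n} {W : T.Walk a b} (hWlen : W.length = T.dist a b)
    (hd2 : T.dist a b = 2*r1)
    (hdmax : ∀ x y : Fin n, T.dist x y ≤ T.dist a b) :
    ree T ≤ (10 * (n : ℝ) - 3 * (g : ℝ) - 7) / 12 ∧
      (ree T = (10 * (n : ℝ) - 3 * (g : ℝ) - 7) / 12 → Nonempty (T ≃g Tnb n g)) := by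
  classical
  have hc := hT.isConnected
  have hne : Nonempty (Fin n) := hc.nonempty
  have hn1 : 0 < n := Fin.pos_iff_nonempty.2 hne
  have hab : a ≠ b := by
    intro h
    rw [h, SimpleGraph.dist_self] at hd2
    omega
  have hnontriv : Nontrivial (Fin n) := ⟨a, b, hab⟩
  have hn2 : 1 < n := by
    have := Fintype.one_lt_card_iff_nontrivial.2 hnontriv
    simpa using this
  have hore : 2 * g ≤ n := by
    have := ore hc (by simpa using hn2)
    rw [hd] at this
    simpa using this
  set c := W.getVert r1 with hcdef
  obtain ⟨hE1, hE2⟩ := even_geom hT hWlen hd2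
  -- the parent function
  have hpar0 : ∀ v : Fin n, ∃ w, v ≠ c → (T.Adj v w ∧ T.dist c w + 1 = T.dist c v) := by
    intro v
    by_cases hvc : v = c
    · exact ⟨v, fun h => absurd hvc h⟩
    · obtain ⟨w, hw1, hw2⟩ := exists_parent hc hvc
      exact ⟨w, fun _ => ⟨hw1, hw2⟩⟩
  choose par hpar using hpar0
  have hsum := ree_eq_sum hT c par hpar
  -- eccentricity facts
  have hecclb : ∀ v, r1 ≤ ecc T v := by
    intro v
    obtain ⟨h1, h2⟩ := ecc_dists (G := T) (a := a) (b := b) v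
    have h3 : T.dist a b ≤ T.dist a v + T.dist v b := hc.dist_triangle
    omega
  have hv3 : ∀ v, v ≠ c → 3 ≤ ecc T v := by
    intro v hvc
    by_contra h
    push_neg at h
    have := hecclb v
    exact hvc (hE1 v (by omega))
  have hlip : ∀ v, v ≠ c → ecc T v ≤ ecc T (par v) + 1 := by
    intro v hvc
    exact ecc_adj hc (hpar v hvc).1
  have hecc2 : ∀ v, 2 ≤ ecc T v := fun v => le_trans hr1 (hecclb v)
  -- real helper
  have key : ∀ k m : ℕ, 0 < k → k ≤ m → (1:ℝ)/(m:ℝ) ≤ 1/(k:ℝ) := by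
    intro k m hk hkm
    apply one_div_le_one_div_of_le
    · exact_mod_cast hk
    · exact_mod_cast hkm
  set F : Fin n → ℝ := fun v => 1/(ecc T v : ℝ) + 1/(ecc T (par v) : ℝ) with hF
  set Gd : Fin n → ℝ := fun v => if 4 ≤ ecc T v then (7:ℝ)/12 else 5/6 with hGd
  have hFG : ∀ v ∈ Finset.univ.erase c, F v ≤ Gd v := by
    intro v hv
    have hvc := Finset.ne_of_mem_erase hv
    have h3 := hv3 v hvc
    have hp2 := hecc2 (par v)
    have hl := hlip v hvc
    simp only [hF, hGd]
    by_cases h4 : 4 ≤ ecc T v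
    · rw [if_pos h4]
      have e1 : (1:ℝ)/(ecc T v) ≤ 1/4 := key 4 _ (by norm_num) h4
      have e2 : (1:ℝ)/(ecc T (par v)) ≤ 1/3 := key 3 _ (by norm_num) (by omega)
      calc 1/(ecc T v : ℝ) + 1/(ecc T (par v) : ℝ) ≤ 1/4 + 1/3 := by linarith
        _ = 7/12 := by norm_num
    · rw [if_neg h4]
      have e1 : (1:ℝ)/(ecc T v) ≤ 1/3 := key 3 _ (by norm_num) h3
      have e2 : (1:ℝ)/(ecc T (par v)) ≤ 1/2 := key 2 _ (by norm_num) hp2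
      calc 1/(ecc T v : ℝ) + 1/(ecc T (par v) : ℝ) ≤ 1/3 + 1/2 := by linarith
        _ = 5/6 := by norm_num
  set B : Finset (Fin n) := (Finset.univ.erase c).filter (fun v => 4 ≤ ecc T v) with hBdef
  set A : Finset (Fin n) := (Finset.univ.erase c).filter (fun v => ¬ 4 ≤ ecc T v) with hAdef
  set k := B.card with hk
  have hcards : A.card + k = n - 1 := by
    have h0 : k + A.card = (Finset.univ.erase c).card := by
      rw [hk, hAdef, hBdef]
      exact Finset.card_filter_add_card_filter_not (p := fun v => 4 ≤ ecc T v)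
    have h1 : (Finset.univ.erase c).card = n - 1 := by
      rw [Finset.card_erase_of_mem (Finset.mem_univ c), Finset.card_univ, Fintype.card_fin]
    omega
  have hGsum : ∑ v ∈ Finset.univ.erase c, Gd v = (7:ℝ)/12 * (k:ℝ) + 5/6 * (A.card : ℝ) := by
    rw [← Finset.sum_filter_add_sum_filter_not (Finset.univ.erase c) (fun v => 4 ≤ ecc T v) Gd]
    have e1 : ∑ v ∈ B, Gd v = (7:ℝ)/12 * (k:ℝ) := by
      have : ∀ v ∈ B, Gd v = (7:ℝ)/12 := by
        intro v hv
        simp only [hGd, if_pos (Finset.mem_filter.1 hv).2]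
      rw [Finset.sum_congr rfl this, Finset.sum_const, nsmul_eq_mul, hk, mul_comm]
    have e2 : ∑ v ∈ A, Gd v = (5:ℝ)/6 * (A.card:ℝ) := by
      have : ∀ v ∈ A, Gd v = (5:ℝ)/6 := by
        intro v hv
        simp only [hGd, if_neg (Finset.mem_filter.1 hv).2]
      rw [Finset.sum_congr rfl this, Finset.sum_const, nsmul_eq_mul, mul_comm]
    rw [hBdef] at e1
    rw [hAdef] at e2
    rw [e1, e2]
  have hub : ree T ≤ (7:ℝ)/12 * (k:ℝ) + 5/6 * (A.card : ℝ) := by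
    rw [hsum, ← hGsum]
    exact Finset.sum_le_sum hFG
  -- domination bound
  have hdomB : g ≤ k + 1 := by
    have hdom : ∀ x : Fin n, x ∈ (insert c (↑B : Set (Fin n))) ∨
        ∃ y ∈ insert c (↑B : Set (Fin n)), T.Adj x y := by
      intro x
      by_cases hxc : x = c
      · left; rw [hxc]; exact Set.mem_insert c _
      by_cases h4 : 4 ≤ ecc T x
      · left
        rw [Set.mem_insert_iff]
        right
        rw [Finset.mem_coe, hBdef, Finset.mem_filter]
        exact ⟨Finset.mem_erase.2 ⟨hxc, Finset.mem_univ x⟩, h4⟩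
      · push_neg at h4
        rcases Nat.lt_or_ge r1 3 with hr | hr
        · have hle : ecc T x ≤ r1 + 1 := by omega
          rcases hE2 x hle with h | h
          · exact absurd h hxc
          · exact Or.inr ⟨c, Set.mem_insert c _, h.symm⟩
        · exact absurd (hE1 x (by have := hv3 x hxc; omega)) hxc
    have h1 := domNum_le_card _ hdom
    rw [hd] at h1
    have h2 : (insert c (↑B : Set (Fin n))).ncard ≤ k + 1 := by
      have h3 := Set.ncard_insert_le c (↑B : Set (Fin n))
      rwa [Set.ncard_coe_finset] at h3
    omega
  have hAcast : (A.card : ℝ) = (n : ℝ) - 1 - (k:ℝ) := by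
    have h1 : A.card = n - 1 - k := by omega
    have h2 : k ≤ n - 1 := by omega
    rw [h1]
    push_cast [Nat.cast_sub h2, Nat.cast_sub (by omega : 1 ≤ n)]
    ring
  have hineq : (7:ℝ)/12 * (k:ℝ) + 5/6 * (A.card : ℝ) ≤ (10 * (n : ℝ) - 3 * (g : ℝ) - 7) / 12 := by
    rw [hAcast]
    have hgk : (g : ℝ) ≤ (k : ℝ) + 1 := by exact_mod_cast hdomB
    linarith
  refine ⟨le_trans hub hineq, ?_⟩
  -- equality case
  intro heq
  have hFsum : ∑ v ∈ Finset.univ.erase c, F v = (10 * (n : ℝ) - 3 * (g : ℝ) - 7) / 12 := by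
    rw [← hsum]; exact heq
  have hGsum2 : ∑ v ∈ Finset.univ.erase c, Gd v = (10 * (n : ℝ) - 3 * (g : ℝ) - 7) / 12 := by
    have hge : ∑ v ∈ Finset.univ.erase c, F v ≤ ∑ v ∈ Finset.univ.erase c, Gd v :=
      Finset.sum_le_sum hFG
    have hle : ∑ v ∈ Finset.univ.erase c, Gd v ≤ (10 * (n : ℝ) - 3 * (g : ℝ) - 7) / 12 := by
      rw [hGsum]; exact hineq
    rw [hFsum] at hge
    linarith
  have hkg : k + 1 = g := by
    have h1 : (7:ℝ)/12 * (k:ℝ) + 5/6 * (A.card : ℝ) = (10 * (n : ℝ) - 3 * (g : ℝ) - 7) / 12 := by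
      rw [← hGsum]; exact hGsum2
    rw [hAcast] at h1
    have h2 : (k : ℝ) + 1 = (g : ℝ) := by linarith
    exact_mod_cast h2
  have hptw : ∀ v ∈ Finset.univ.erase c, F v = Gd v := by
    by_contra hno
    push_neg at hno
    obtain ⟨v0, hv0, hne0⟩ := hno
    have hlt : F v0 < Gd v0 := lt_of_le_of_ne (hFG v0 hv0) hne0
    have := Finset.sum_lt_sum hFG ⟨v0, hv0, hlt⟩
    rw [hFsum, hGsum2] at this
    exact lt_irrefl _ this
  -- structure on A
  have hA3 : ∀ v ∈ A, ecc T v = 3 := by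
    intro v hv
    obtain ⟨hv1, hv2⟩ := Finset.mem_filter.1 hv
    have h3 := hv3 v (Finset.ne_of_mem_erase hv1)
    omega
  have hApar2 : ∀ v ∈ A, ecc T (par v) = 2 := by
    intro v hv
    obtain ⟨hv1, hv2⟩ := Finset.mem_filter.1 hv
    have heqv := hptw v hv1
    simp only [hF, hGd, if_neg hv2] at heqv
    rw [hA3 v hv] at heqv
    have hp2 := hecc2 (par v)
    have hpos : (0:ℝ) < (ecc T (par v) : ℝ) := by exact_mod_cast (by omega : 0 < ecc T (par v))
    have h2 : (ecc T (par v) : ℝ) = 2 := by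
      field_simp at heqv
      push_cast at heqv
      linarith
    exact_mod_cast h2
  have hparA : ∀ v ∈ A, par v = c := by
    intro v hv
    exact hE1 (par v) (by rw [hApar2 v hv]; omega)
  -- structure on B
  have hB4 : ∀ v ∈ B, ecc T v = 4 ∧ ecc T (par v) = 3 := by
    intro v hv
    obtain ⟨hv1, hv2⟩ := Finset.mem_filter.1 hv
    have hvc := Finset.ne_of_mem_erase hv1
    have heqv := hptw v hv1
    simp only [hF, hGd, if_pos hv2] at heqv
    have hl := hlip v hvc
    have hp3 : 3 ≤ ecc T (par v) := by omega
    have e1 : (1:ℝ)/(ecc T v : ℝ) ≤ 1/4 := key 4 _ (by norm_num) hv2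
    have e2 : (1:ℝ)/(ecc T (par v) : ℝ) ≤ 1/3 := key 3 _ (by norm_num) hp3
    have he1 : (1:ℝ)/(ecc T v : ℝ) = 1/4 := by linarith
    have he2 : (1:ℝ)/(ecc T (par v) : ℝ) = 1/3 := by linarith
    have hpos1 : (0:ℝ) < (ecc T v : ℝ) := by exact_mod_cast (by omega : 0 < ecc T v)
    have hpos2 : (0:ℝ) < (ecc T (par v) : ℝ) := by
      exact_mod_cast (by omega : 0 < ecc T (par v))
    constructor
    · have : (ecc T v : ℝ) = 4 := by
        field_simp at he1
        linarith
      exact_mod_cast this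
    · have : (ecc T (par v) : ℝ) = 3 := by
        field_simp at he2
        linarith
      exact_mod_cast this
  -- A is nonempty, center has eccentricity 2
  have hAcard : A.card = n - g := by omega
  have hAne : A.Nonempty := by
    rw [← Finset.card_pos, hAcard]
    omega
  obtain ⟨a0, ha0⟩ := hAne
  have hcc : ecc T c = 2 := by
    rw [← hparA a0 ha0]
    exact hApar2 a0 ha0
  have hBpar : ∀ v ∈ B, par v ∈ A := by
    intro v hv
    obtain ⟨h4, h3⟩ := hB4 v hv
    refine Finset.mem_filter.2 ⟨Finset.mem_erase.2 ⟨?_, Finset.mem_univ _⟩, by omega⟩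
    intro hpc
    rw [hpc, hcc] at h3
    omega
  -- injectivity of par on B via domination
  have himgsub : B.image par ⊆ A := by
    intro y hy
    obtain ⟨v, hv, rfl⟩ := Finset.mem_image.1 hy
    exact hBpar v hv
  have hdom2 : g ≤ (B.image par).card + 1 := by
    have hdom : ∀ x : Fin n, x ∈ (insert c (↑(B.image par) : Set (Fin n))) ∨
        ∃ y ∈ insert c (↑(B.image par) : Set (Fin n)), T.Adj x y := by
      intro x
      by_cases hxc : x = c
      · left; rw [hxc]; exact Set.mem_insert c _
      have hx_mem : x ∈ Finset.univ.erase c := Finset.mem_erase.2 ⟨hxc, Finset.mem_univ x⟩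
      by_cases h4 : 4 ≤ ecc T x
      · right
        refine ⟨par x, ?_, (hpar x hxc).1⟩
        rw [Set.mem_insert_iff]
        right
        rw [Finset.mem_coe]
        exact Finset.mem_image_of_mem par (Finset.mem_filter.2 ⟨hx_mem, h4⟩)
      · right
        have hxA : x ∈ A := Finset.mem_filter.2 ⟨hx_mem, h4⟩
        refine ⟨c, Set.mem_insert c _, ?_⟩
        have := (hpar x hxc).1
        rwa [hparA x hxA] at this
    have h1 := domNum_le_card _ hdom
    rw [hd] at h1
    have h2 : (insert c (↑(B.image par) : Set (Fin n))).ncard ≤ (B.image par).card + 1 := by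
      have h3 := Set.ncard_insert_le c (↑(B.image par) : Set (Fin n))
      rwa [Set.ncard_coe_finset] at h3
    omega
  have hinjB : Set.InjOn par ↑B := by
    apply Finset.card_image_iff.1
    have h1 : (B.image par).card ≤ B.card := Finset.card_image_le
    omega
  -- edge characterization
  have hedge : ∀ x y, T.Adj x y ↔ ∃ v ∈ Finset.univ.erase c, s(v, par v) = s(x, y) := by
    intro x y
    constructor
    · intro haxy
      have h1 : s(x,y) ∈ T.edgeFinset := SimpleGraph.mem_edgeFinset.2 haxy
      rw [edge_decomp hT c par hpar] at h1
      obtain ⟨v, hv, hveq⟩ := Finset.mem_image.1 h1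
      exact ⟨v, hv, hveq⟩
    · rintro ⟨v, hv, hveq⟩
      have h1 : s(v, par v) ∈ T.edgeFinset :=
        SimpleGraph.mem_edgeFinset.2 (hpar v (Finset.ne_of_mem_erase hv)).1
      rw [hveq] at h1
      exact SimpleGraph.mem_edgeFinset.1 h1
  exact build_iso hg hore c par A B
    (by rw [hAdef, hBdef, Finset.union_comm, Finset.filter_union_filter_not_eq])
    (by rw [hAdef, hBdef]; exact (Finset.disjoint_filter_filter_not _ _ _).symm)
    hAcard (by omega) hparA hBpar hinjB hedge

lemma tnb_adj (hg : 3 ≤ g) (hn : 2*g ≤ n) (u v : Fin n) :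
    (Tnb n g).Adj u v ↔
      ((u.val = 0 ∧ 1 ≤ v.val ∧ v.val ≤ n - g) ∨ (v.val = 0 ∧ 1 ≤ u.val ∧ u.val ≤ n - g) ∨
       (1 ≤ u.val ∧ u.val ≤ g - 1 ∧ v.val = u.val + (n-g)) ∨
       (1 ≤ v.val ∧ v.val ≤ g - 1 ∧ u.val = v.val + (n-g))) := by
  rw [Tnb, SimpleGraph.fromRel_adj, ne_eq, Fin.ext_iff]
  omega

lemma backward (hg : 3 ≤ g) (hT : T.IsTree) (hd : domNum T = g) (φ : T ≃g Tnb n g) :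
    ree T = (10 * (n : ℝ) - 3 * (g : ℝ) - 7) / 12 := by
  classical
  have hc := hT.isConnected
  have hne : Nonempty (Fin n) := hc.nonempty
  have hn1 : 0 < n := Fin.pos_iff_nonempty.2 hne
  have hgn : g ≤ n := by
    have := domNum_le_fincard (G := T)
    rw [hd, Fintype.card_fin] at this
    exact this
  have hn2 : 1 < n := by omega
  have hore : 2*g ≤ n := by
    have := ore hc (by rw [Fintype.card_fin]; omega)
    rw [hd] at this
    rwa [Fintype.card_fin] at this
  set c : Fin n := φ.symm ⟨0, by omega⟩ with hcdef
  have hφc : (φ c).val = 0 := by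
    have : φ c = ⟨0, by omega⟩ := by
      rw [hcdef]
      exact φ.apply_symm_apply _
    rw [this]
  have hAdj : ∀ x y, T.Adj x y ↔ (Tnb n g).Adj (φ x) (φ y) := fun x y => (φ.map_rel_iff).symm
  have hφinj : Function.Injective φ := φ.toEquiv.injective
  have htri : ∀ x : Fin n, x = c ∨ (1 ≤ (φ x).val ∧ (φ x).val ≤ n - g) ∨
      (n - g + 1 ≤ (φ x).val ∧ (φ x).val ≤ n - 1) := by
    intro x
    by_cases hx : x = c
    · exact Or.inl hx
    · have h1 : (φ x).val ≠ 0 := by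
        intro h0
        apply hx
        apply hφinj
        apply Fin.ext
        rw [hφc, h0]
      have h2 := (φ x).isLt
      omega
  -- adjacency characterizations
  have hAadj : ∀ y, T.Adj c y ↔ (1 ≤ (φ y).val ∧ (φ y).val ≤ n - g) := by
    intro y
    rw [hAdj, tnb_adj hg hore, hφc]
    omega
  have hAA : ∀ x y, 1 ≤ (φ x).val → (φ x).val ≤ n - g → 1 ≤ (φ y).val → (φ y).val ≤ n - g →
      ¬ T.Adj x y := by
    intro x y h1 h2 h3 h4
    rw [hAdj, tnb_adj hg hore]
    omega
  -- pendant structure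
  have hfBlt : ∀ x : Fin n, (φ x).val - (n-g) < n := by
    intro x
    have := (φ x).isLt
    omega
  set fB : Fin n → Fin n := fun x => φ.symm ⟨(φ x).val - (n-g), hfBlt x⟩ with hfBdef
  have hφfB : ∀ x, (φ (fB x)).val = (φ x).val - (n-g) := by
    intro x
    rw [hfBdef]
    simp
  have hBadj : ∀ x y, n - g + 1 ≤ (φ x).val → (T.Adj x y ↔ y = fB x) := by
    intro x y hx
    have hxlt := (φ x).isLt
    rw [hAdj, tnb_adj hg hore]
    constructor
    · intro h
      have hyval : (φ y).val = (φ x).val - (n-g) := by omega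
      apply hφinj
      apply Fin.ext
      rw [hyval, hφfB]
    · intro h
      subst h
      have := hφfB x
      right; right; right
      omega
  have hfBA : ∀ x, n - g + 1 ≤ (φ x).val → (1 ≤ (φ (fB x)).val ∧ (φ (fB x)).val ≤ n - g) := by
    intro x hx
    have hxlt := (φ x).isLt
    rw [hφfB]
    omega
  -- distances from the centre
  have hdcA : ∀ x, 1 ≤ (φ x).val → (φ x).val ≤ n - g → T.dist c x = 1 :=
    fun x h1 h2 => SimpleGraph.dist_eq_one_iff_adj.2 ((hAadj x).2 ⟨h1, h2⟩)
  have hdcB : ∀ x, n - g + 1 ≤ (φ x).val → T.dist c x = 2 := by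
    intro x hx
    have h2 : T.dist c x ≤ 2 := by
      have t1 : T.dist c x ≤ T.dist c (fB x) + T.dist (fB x) x := hc.dist_triangle
      have t2 : T.dist c (fB x) = 1 := hdcA (fB x) (hfBA x hx).1 (hfBA x hx).2
      have t3 : T.dist (fB x) x = 1 :=
        SimpleGraph.dist_eq_one_iff_adj.2 (((hBadj x (fB x) hx).2 rfl).symm)
      omega
    have h0 : c ≠ x := by
      intro h
      rw [← h, hφc] at hx
      omega
    have h1 : ¬ T.Adj c x := by
      rw [hAadj]
      omega
    have hpos : 0 < T.dist c x := hc.pos_dist_of_ne h0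
    have hne1 : T.dist c x ≠ 1 := fun h => h1 (SimpleGraph.dist_eq_one_iff_adj.1 h)
    omega
  have hdc2 : ∀ x, T.dist c x ≤ 2 := by
    intro x
    rcases htri x with h | ⟨h1, h2⟩ | ⟨h1, h2⟩
    · have h0 : T.dist c x = 0 := by rw [h, SimpleGraph.dist_self]
      omega
    · have h0 := hdcA x h1 h2
      omega
    · have h0 := hdcB x h1
      omega
  -- common-neighbour helpers
  have hmid2 : ∀ x y, T.dist x y = 2 → ∃ z, T.Adj x z ∧ T.Adj z y := by
    intro x y h2
    obtain ⟨p, hp⟩ := (hc x y).exists_walk_length_eq_dist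
    rw [h2] at hp
    have h01 := p.adj_getVert_succ (i := 0) (by omega)
    rw [p.getVert_zero] at h01
    refine ⟨p.getVert 1, h01, ?_⟩
    have h12 := p.adj_getVert_succ (i := 1) (by omega)
    have hend : p.getVert 2 = y := by
      have hgl := p.getVert_length
      rwa [hp] at hgl
    rwa [hend] at h12
  have hmid3 : ∀ x y, T.dist x y = 3 → ∃ z1 z2, T.Adj x z1 ∧ T.Adj z1 z2 ∧ T.Adj z2 y := by
    intro x y h3
    obtain ⟨p, hp⟩ := (hc x y).exists_walk_length_eq_dist
    rw [h3] at hp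
    have h01 := p.adj_getVert_succ (i := 0) (by omega)
    rw [p.getVert_zero] at h01
    refine ⟨p.getVert 1, p.getVert 2, h01, p.adj_getVert_succ (i := 1) (by omega), ?_⟩
    have h23 := p.adj_getVert_succ (i := 2) (by omega)
    have hend : p.getVert 3 = y := by
      have hgl := p.getVert_length
      rwa [hp] at hgl
    rwa [hend] at h23
  -- eccentricity of the centre
  have heccC : ecc T c = 2 := by
    apply le_antisymm
    · exact ciSup_le (fun u => hdc2 u)
    · have hb0 : n - g + 1 ≤ (φ (φ.symm ⟨n-1, by omega⟩)).val := by
        simp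
        omega
      have := dist_le_ecc (G := T) c (φ.symm ⟨n-1, by omega⟩)
      rw [hdcB _ hb0] at this
      exact this
  -- eccentricity of star leaves
  have heccA : ∀ x, 1 ≤ (φ x).val → (φ x).val ≤ n - g → ecc T x = 3 := by
    intro x h1 h2
    have hub : ∀ u, T.dist x u ≤ 3 := by
      intro u
      have t1 : T.dist x u ≤ T.dist x c + T.dist c u := hc.dist_triangle
      have t2 : T.dist x c = 1 := by rw [SimpleGraph.dist_comm]; exact hdcA x h1 h2
      have := hdc2 u
      omega
    set j : ℕ := if (φ x).val = 1 then 2 else 1 with hjdef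
    have hj1 : 1 ≤ j ∧ j ≤ g - 1 ∧ j ≠ (φ x).val := by
      rw [hjdef]
      split_ifs with h
      · refine ⟨by omega, by omega, by omega⟩
      · exact ⟨le_refl 1, by omega, fun hh => h hh.symm⟩
    obtain ⟨hja, hjb, hjc⟩ := hj1
    set b' : Fin n := φ.symm ⟨j + (n-g), by omega⟩ with hb'def
    have hφb' : (φ b').val = j + (n-g) := by rw [hb'def]; simp
    have hb'B : n - g + 1 ≤ (φ b').val := by omega
    have hfb' : (φ (fB b')).val = j := by rw [hφfB]; omega
    have hxb' : x ≠ b' := by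
      intro h
      rw [h, hφb'] at h2
      omega
    have hnadj : ¬ T.Adj x b' := by
      intro h
      have hx := (hBadj b' x hb'B).1 h.symm
      apply hjc
      rw [hx, hfb']
    have hne2 : T.dist x b' ≠ 2 := by
      intro h
      obtain ⟨z, hz1, hz2⟩ := hmid2 x b' h
      have hz3 : z = fB b' := (hBadj b' z hb'B).1 hz2.symm
      rw [hz3] at hz1
      exact hAA x (fB b') h1 h2 (by rw [hfb']; omega) (by rw [hfb']; omega) hz1
    have hub3 : T.dist x b' ≤ 3 := hub b'
    have hpos : 0 < T.dist x b' := hc.pos_dist_of_ne hxb'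
    have hne1 : T.dist x b' ≠ 1 := fun h => hnadj (SimpleGraph.dist_eq_one_iff_adj.1 h)
    have h3 : T.dist x b' = 3 := by omega
    apply le_antisymm
    · exact ciSup_le hub
    · have := dist_le_ecc (G := T) x b'
      rw [h3] at this
      exact this
  -- eccentricity of pendant vertices
  have heccB : ∀ x, n - g + 1 ≤ (φ x).val → ecc T x = 4 := by
    intro x hx
    have hxlt := (φ x).isLt
    have hub : ∀ u, T.dist x u ≤ 4 := by
      intro u
      have t1 : T.dist x u ≤ T.dist x c + T.dist c u := hc.dist_triangle
      have t2 : T.dist x c = 2 := by rw [SimpleGraph.dist_comm]; exact hdcB x hx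
      have := hdc2 u
      omega
    set j : ℕ := if (φ x).val = 1 + (n-g) then 2 else 1 with hjdef
    have hj1 : 1 ≤ j ∧ j ≤ g - 1 ∧ j + (n-g) ≠ (φ x).val := by
      rw [hjdef]
      split_ifs with h
      · refine ⟨by omega, by omega, by omega⟩
      · refine ⟨le_refl 1, by omega, fun hh => h hh.symm⟩
    obtain ⟨hja, hjb, hjc⟩ := hj1
    set b' : Fin n := φ.symm ⟨j + (n-g), by omega⟩ with hb'def
    have hφb' : (φ b').val = j + (n-g) := by rw [hb'def]; simp
    have hb'B : n - g + 1 ≤ (φ b').val := by omega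
    have hfb' : (φ (fB b')).val = j := by rw [hφfB]; omega
    have hfx : (φ (fB x)).val = (φ x).val - (n-g) := hφfB x
    have hxb' : x ≠ b' := by
      intro h
      rw [h, hφb'] at hjc
      exact hjc rfl
    have hnadj : ¬ T.Adj x b' := by
      intro h
      have := (hBadj x b' hx).1 h
      rw [this, hφfB] at hφb'
      omega
    have hne2 : T.dist x b' ≠ 2 := by
      intro h
      obtain ⟨z, hz1, hz2⟩ := hmid2 x b' h
      have hz3 : z = fB x := (hBadj x z hx).1 hz1
      have hz4 : z = fB b' := (hBadj b' z hb'B).1 hz2.symm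
      rw [hz3] at hz4
      have := congrArg (fun w => (φ w).val) hz4
      simp only [hfx, hfb'] at this
      omega
    have hne3 : T.dist x b' ≠ 3 := by
      intro h
      obtain ⟨z1, z2, hz1, hz2, hz3⟩ := hmid3 x b' h
      have hza : z1 = fB x := (hBadj x z1 hx).1 hz1
      have hzb : z2 = fB b' := (hBadj b' z2 hb'B).1 hz3.symm
      rw [hza, hzb] at hz2
      exact hAA (fB x) (fB b') (by omega) (by omega) (by rw [hfb']; omega)
        (by rw [hfb']; omega) hz2
    have hpos : 0 < T.dist x b' := hc.pos_dist_of_ne hxb'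
    have hne1 : T.dist x b' ≠ 1 := fun h => hnadj (SimpleGraph.dist_eq_one_iff_adj.1 h)
    have h4 : T.dist x b' = 4 := by
      have := hub b'
      omega
    apply le_antisymm
    · exact ciSup_le hub
    · have := dist_le_ecc (G := T) x b'
      rw [h4] at this
      exact this
  -- parent function
  have hpar0 : ∀ v : Fin n, ∃ w, v ≠ c → (T.Adj v w ∧ T.dist c w + 1 = T.dist c v) := by
    intro v
    by_cases hvc : v = c
    · exact ⟨v, fun h => absurd hvc h⟩
    · obtain ⟨w, hw1, hw2⟩ := exists_parent hc hvc
      exact ⟨w, fun _ => ⟨hw1, hw2⟩⟩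
  choose par hpar using hpar0
  have hparA2 : ∀ v, 1 ≤ (φ v).val → (φ v).val ≤ n - g → par v = c := by
    intro v h1 h2
    have hvc : v ≠ c := by
      intro h
      rw [h, hφc] at h1
      omega
    have := (hpar v hvc).2
    rw [hdcA v h1 h2] at this
    have h0 : T.dist c (par v) = 0 := by omega
    exact (hc.dist_eq_zero_iff.1 h0).symm
  have hparB2 : ∀ v, n - g + 1 ≤ (φ v).val → par v = fB v := by
    intro v h1
    have hvc : v ≠ c := by
      intro h
      rw [h, hφc] at h1
      omega
    exact (hBadj v (par v) h1).1 (hpar v hvc).1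
  -- the final sum
  rw [ree_eq_sum hT c par hpar]
  rw [← Finset.sum_filter_add_sum_filter_not (Finset.univ.erase c)
    (fun v => (φ v).val ≤ n - g)]
  set Af := (Finset.univ.erase c).filter (fun v => (φ v).val ≤ n - g) with hAfdef
  set Bf := (Finset.univ.erase c).filter (fun v => ¬ (φ v).val ≤ n - g) with hBfdef
  have hmemA : ∀ v ∈ Af, 1 ≤ (φ v).val ∧ (φ v).val ≤ n - g := by
    intro v hv
    obtain ⟨hv1, hv2⟩ := Finset.mem_filter.1 hv
    rcases htri v with h | ⟨h1, h2⟩ | ⟨h1, h2⟩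
    · exact absurd h (Finset.ne_of_mem_erase hv1)
    · exact ⟨h1, h2⟩
    · omega
  have hmemB : ∀ v ∈ Bf, n - g + 1 ≤ (φ v).val := by
    intro v hv
    obtain ⟨hv1, hv2⟩ := Finset.mem_filter.1 hv
    omega
  have hBfcard : Bf.card = g - 1 := by
    have hcard : Bf.card = (Finset.Ico (n-g+1) n).card := by
      apply Finset.card_bij (fun w _ => (φ w).val)
      · intro w hw
        rw [Finset.mem_Ico]
        exact ⟨hmemB w hw, (φ w).isLt⟩
      · intro w1 hw1 w2 hw2 heq
        exact hφinj (Fin.ext heq)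
      · intro m hm
        rw [Finset.mem_Ico] at hm
        refine ⟨φ.symm ⟨m, hm.2⟩, ?_, by simp⟩
        rw [hBfdef, Finset.mem_filter]
        constructor
        · refine Finset.mem_erase.2 ⟨?_, Finset.mem_univ _⟩
          intro h
          have : (φ (φ.symm ⟨m, hm.2⟩)).val = 0 := by rw [h]; exact hφc
          simp at this
          omega
        · simp
          omega
    rw [hcard, Nat.card_Ico]
    omega
  have hAfcard : Af.card = n - g := by
    have h0 : Af.card + Bf.card = (Finset.univ.erase c).card :=
      Finset.card_filter_add_card_filter_not (p := fun v => (φ v).val ≤ n - g)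
    have h1 : (Finset.univ.erase c).card = n - 1 := by
      rw [Finset.card_erase_of_mem (Finset.mem_univ c), Finset.card_univ, Fintype.card_fin]
    omega
  have hsumA : ∑ v ∈ Af, (1/(ecc T v : ℝ) + 1/(ecc T (par v) : ℝ)) = (5:ℝ)/6 * (Af.card) := by
    rw [Finset.sum_congr rfl (fun v hv => ?_), Finset.sum_const, nsmul_eq_mul, mul_comm]
    obtain ⟨h1, h2⟩ := hmemA v hv
    rw [heccA v h1 h2, hparA2 v h1 h2, heccC]
    norm_num
  have hsumB : ∑ v ∈ Bf, (1/(ecc T v : ℝ) + 1/(ecc T (par v) : ℝ)) = (7:ℝ)/12 * (Bf.card) := by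
    rw [Finset.sum_congr rfl (fun v hv => ?_), Finset.sum_const, nsmul_eq_mul, mul_comm]
    have h1 := hmemB v hv
    rw [heccB v h1, hparB2 v h1, heccA (fB v) (hfBA v h1).1 (hfBA v h1).2]
    norm_num
  rw [hsumA, hsumB, hAfcard, hBfcard]
  have c1 : ((n - g : ℕ) : ℝ) = (n:ℝ) - g := by
    push_cast [Nat.cast_sub (by omega : g ≤ n)]
    ring
  have c2 : ((g - 1 : ℕ) : ℝ) = (g:ℝ) - 1 := by
    push_cast [Nat.cast_sub (by omega : 1 ≤ g)]
    ring
  rw [c1, c2]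
  ring

lemma odd_case {r1 : ℕ} (hg : 3 ≤ g) (hr1 : 2 ≤ r1)
    (hT : T.IsTree) (hd : domNum T = g)
    {a b : Fin n} {W : T.Walk a b} (hWlen : W.length = T.dist a b)
    (hd2 : T.dist a b = 2*r1 + 1)
    (hdmax : ∀ x y : Fin n, T.dist x y ≤ T.dist a b) :
    ree T < (10 * (n : ℝ) - 3 * (g : ℝ) - 7) / 12 := by
  classical
  have hc := hT.isConnected
  have hne : Nonempty (Fin n) := hc.nonempty
  have hn1 : 0 < n := Fin.pos_iff_nonempty.2 hne
  have hab : a ≠ b := by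
    intro h
    rw [h, SimpleGraph.dist_self] at hd2
    omega
  have hn2 : 1 < n := by
    have := Fintype.one_lt_card_iff_nontrivial.2 ⟨a, b, hab⟩
    simpa using this
  have hore : 2 * g ≤ n := by
    have := ore hc (by simpa using hn2)
    rw [hd] at this
    simpa using this
  set c1 := W.getVert r1 with hc1def
  set c2 := W.getVert (r1+1) with hc2def
  obtain ⟨hO1, hO2⟩ := odd_geom hT hWlen hd2
  have hc12 : c1 ≠ c2 := by
    intro h
    have g1 := geodesic_getVert hc W hWlen (i := r1) (by omega)
    have g2 := geodesic_getVert hc W hWlen (i := r1+1) (by omega)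
    rw [hc1def, hc2def] at h
    rw [h] at g1
    omega
  have hpar0 : ∀ v : Fin n, ∃ w, v ≠ c1 → (T.Adj v w ∧ T.dist c1 w + 1 = T.dist c1 v) := by
    intro v
    by_cases hvc : v = c1
    · exact ⟨v, fun h => absurd hvc h⟩
    · obtain ⟨w, hw1, hw2⟩ := exists_parent hc hvc
      exact ⟨w, fun _ => ⟨hw1, hw2⟩⟩
  choose par hpar using hpar0
  have hsum := ree_eq_sum hT c1 par hpar
  have hecclb : ∀ v, r1 + 1 ≤ ecc T v := by
    intro v
    obtain ⟨h1, h2⟩ := ecc_dists (G := T) (a := a) (b := b) v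
    have h3 : T.dist a b ≤ T.dist a v + T.dist v b := hc.dist_triangle
    omega
  have hv4 : ∀ v, v ≠ c1 → v ≠ c2 → r1 + 2 ≤ ecc T v := by
    intro v h1 h2
    by_contra h
    push_neg at h
    rcases hO1 v (by omega) with h' | h'
    · exact h1 h'
    · exact h2 h'
  have key : ∀ k m : ℕ, 0 < k → k ≤ m → (1:ℝ)/(m:ℝ) ≤ 1/(k:ℝ) := by
    intro k m hk hkm
    apply one_div_le_one_div_of_le
    · exact_mod_cast hk
    · exact_mod_cast hkm
  set F : Fin n → ℝ := fun v => 1/(ecc T v : ℝ) + 1/(ecc T (par v) : ℝ) with hF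
  -- split off c2
  have hc2mem : c2 ∈ Finset.univ.erase c1 :=
    Finset.mem_erase.2 ⟨fun h => hc12 h.symm, Finset.mem_univ _⟩
  set s' := (Finset.univ.erase c1).erase c2 with hs'def
  have hsplit : Finset.univ.erase c1 = insert c2 s' := by
    rw [hs'def, Finset.insert_erase hc2mem]
  have hc2ns' : c2 ∉ s' := Finset.notMem_erase _ _
  have hFc2 : F c2 ≤ 2/3 := by
    simp only [hF]
    have h1 := hecclb c2
    have h2 := hecclb (par c2)
    have e1 : (1:ℝ)/(ecc T c2 : ℝ) ≤ 1/3 := key 3 _ (by norm_num) (by omega)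
    have e2 : (1:ℝ)/(ecc T (par c2) : ℝ) ≤ 1/3 := key 3 _ (by norm_num) (by omega)
    linarith
  set Gd : Fin n → ℝ := fun v => if r1 + 3 ≤ ecc T v then (9:ℝ)/20 else 7/12 with hGd
  have hFG : ∀ v ∈ s', F v ≤ Gd v := by
    intro v hv
    have hv1 : v ≠ c2 := Finset.ne_of_mem_erase hv
    have hv2 : v ≠ c1 := Finset.ne_of_mem_erase (Finset.mem_of_mem_erase hv)
    have h4 := hv4 v hv2 hv1
    have hpl := ecc_adj hc (hpar v hv2).1
    have hplb := hecclb (par v)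
    simp only [hF, hGd]
    by_cases h5 : r1 + 3 ≤ ecc T v
    · rw [if_pos h5]
      have e1 : (1:ℝ)/(ecc T v : ℝ) ≤ 1/5 := key 5 _ (by norm_num) (by omega)
      have e2 : (1:ℝ)/(ecc T (par v) : ℝ) ≤ 1/4 := key 4 _ (by norm_num) (by omega)
      calc 1/(ecc T v : ℝ) + 1/(ecc T (par v) : ℝ) ≤ 1/5 + 1/4 := by linarith
        _ = 9/20 := by norm_num
    · rw [if_neg h5]
      have e1 : (1:ℝ)/(ecc T v : ℝ) ≤ 1/4 := key 4 _ (by norm_num) (by omega)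
      have e2 : (1:ℝ)/(ecc T (par v) : ℝ) ≤ 1/3 := key 3 _ (by norm_num) (by omega)
      calc 1/(ecc T v : ℝ) + 1/(ecc T (par v) : ℝ) ≤ 1/4 + 1/3 := by linarith
        _ = 7/12 := by norm_num
  set Bs := s'.filter (fun v => r1 + 3 ≤ ecc T v) with hBsdef
  set k := Bs.card with hk
  have hs'card : s'.card = n - 2 := by
    rw [hs'def, Finset.card_erase_of_mem hc2mem,
      Finset.card_erase_of_mem (Finset.mem_univ c1), Finset.card_univ, Fintype.card_fin]
    omega
  have hcards : (s'.filter (fun v => ¬ r1 + 3 ≤ ecc T v)).card + k = n - 2 := by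
    have h0 : k + (s'.filter (fun v => ¬ r1 + 3 ≤ ecc T v)).card = s'.card := by
      rw [hk, hBsdef]
      exact Finset.card_filter_add_card_filter_not (p := fun v => r1 + 3 ≤ ecc T v)
    omega
  -- domination bound : g ≤ k + 2
  have hdomB : g ≤ k + 2 := by
    have hdom : ∀ x : Fin n, x ∈ (insert c1 (insert c2 (↑Bs : Set (Fin n)))) ∨
        ∃ y ∈ insert c1 (insert c2 (↑Bs : Set (Fin n))), T.Adj x y := by
      intro x
      by_cases hx1 : x = c1
      · left; rw [hx1]; exact Set.mem_insert _ _
      by_cases hx2 : x = c2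
      · left; rw [hx2]; exact Set.mem_insert_of_mem _ (Set.mem_insert _ _)
      by_cases h5 : r1 + 3 ≤ ecc T x
      · left
        right; right
        rw [Finset.mem_coe, hBsdef, Finset.mem_filter]
        exact ⟨Finset.mem_erase.2 ⟨hx2, Finset.mem_erase.2 ⟨hx1, Finset.mem_univ x⟩⟩, h5⟩
      · push_neg at h5
        rcases hO2 x (by omega) with (h | h) | (h | h)
        · exact absurd h hx1
        · exact absurd h hx2
        · exact Or.inr ⟨c1, Set.mem_insert _ _, h.symm⟩
        · exact Or.inr ⟨c2, Set.mem_insert_of_mem _ (Set.mem_insert _ _), h.symm⟩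
    have h1 := domNum_le_card _ hdom
    rw [hd] at h1
    have h2 : (insert c1 (insert c2 (↑Bs : Set (Fin n)))).ncard ≤ k + 2 := by
      calc (insert c1 (insert c2 (↑Bs : Set (Fin n)))).ncard
          ≤ (insert c2 (↑Bs : Set (Fin n))).ncard + 1 := Set.ncard_insert_le _ _
        _ ≤ ((↑Bs : Set (Fin n)).ncard + 1) + 1 := by
            have := Set.ncard_insert_le c2 (↑Bs : Set (Fin n))
            omega
        _ = k + 2 := by rw [Set.ncard_coe_finset]
    omega
  -- assemble
  have hGsum : ∑ v ∈ s', Gd v = (9:ℝ)/20 * (k:ℝ) + 7/12 * ((n - 2 - k : ℕ):ℝ) := by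
    rw [← Finset.sum_filter_add_sum_filter_not s' (fun v => r1 + 3 ≤ ecc T v) Gd]
    have e1 : ∑ v ∈ s'.filter (fun v => r1 + 3 ≤ ecc T v), Gd v = (9:ℝ)/20 * (k:ℝ) := by
      have h' : ∀ v ∈ s'.filter (fun v => r1 + 3 ≤ ecc T v), Gd v = (9:ℝ)/20 := by
        intro v hv
        simp only [hGd, if_pos (Finset.mem_filter.1 hv).2]
      rw [Finset.sum_congr rfl h', Finset.sum_const, nsmul_eq_mul, ← hBsdef, ← hk, mul_comm]
    have e2 : ∑ v ∈ s'.filter (fun v => ¬ r1 + 3 ≤ ecc T v), Gd v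
        = (7:ℝ)/12 * ((n - 2 - k : ℕ):ℝ) := by
      have h' : ∀ v ∈ s'.filter (fun v => ¬ r1 + 3 ≤ ecc T v), Gd v = (7:ℝ)/12 := by
        intro v hv
        simp only [hGd, if_neg (Finset.mem_filter.1 hv).2]
      rw [Finset.sum_congr rfl h', Finset.sum_const, nsmul_eq_mul, mul_comm]
      congr 2
      omega
    rw [e1, e2]
  have hub : ree T ≤ 2/3 + ((9:ℝ)/20 * (k:ℝ) + 7/12 * ((n - 2 - k : ℕ):ℝ)) := by
    rw [hsum, hsplit, Finset.sum_insert hc2ns', ← hGsum]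
    have h1 : ∑ v ∈ s', F v ≤ ∑ v ∈ s', Gd v := Finset.sum_le_sum hFG
    have h2 : (Finset.univ.erase c1).sum F = F c2 + ∑ v ∈ s', F v := by
      rw [hsplit, Finset.sum_insert hc2ns']
    linarith [hFc2]
  have hkn : k ≤ n - 2 := by omega
  have hcast : ((n - 2 - k : ℕ) : ℝ) = (n:ℝ) - 2 - (k:ℝ) := by
    push_cast [Nat.cast_sub hkn, Nat.cast_sub (by omega : 2 ≤ n)]
    ring
  have hgk : (g:ℝ) ≤ (k:ℝ) + 2 := by exact_mod_cast hdomB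
  have hgn : (g:ℝ) ≤ (n:ℝ) := by
    have := domNum_le_fincard (G := T)
    rw [hd, Fintype.card_fin] at this
    exact_mod_cast this
  have hn6 : (6:ℝ) ≤ (n:ℝ) := by
    exact_mod_cast (by omega : 6 ≤ n)
  rw [hcast] at hub
  have hkr : (k:ℝ) ≤ (n:ℝ) - 2 := by
    have : ((k:ℕ):ℝ) ≤ ((n - 2 : ℕ):ℝ) := by exact_mod_cast hkn
    rwa [Nat.cast_sub (by omega : 2 ≤ n)] at this
  nlinarith [hub, hgk, hgn, hn6, hkr]

/-- for γ ≥ 3 and a tree T on n vertices with domination number γ,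
ξ^{ee}(T) ≤ (10n - 3γ - 7)/12 with equality iff T ≅ T_{n,γ}. -/
theorem stmt13 (n g : ℕ) (hg : 3 ≤ g)
    (T : SimpleGraph (Fin n)) (hT : T.IsTree) (hd : domNum T = g) :
    ree T ≤ (10 * (n : ℝ) - 3 * (g : ℝ) - 7) / 12 ∧
    (ree T = (10 * (n : ℝ) - 3 * (g : ℝ) - 7) / 12 ↔ Nonempty (T ≃g Tnb n g)) := by
  classical
  have hc := hT.isConnected
  have hne : Nonempty (Fin n) := hc.nonempty
  obtain ⟨⟨a, b⟩, hab⟩ := Finite.exists_max (fun p : Fin n × Fin n => T.dist p.1 p.2)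
  have hdmax : ∀ x y : Fin n, T.dist x y ≤ T.dist a b := fun x y => hab (x, y)
  obtain ⟨W, hWP, hWlen⟩ := hc.exists_path_of_dist a b
  have heccd : ∀ x, ecc T x ≤ T.dist a b := by
    intro x
    obtain ⟨u, hu⟩ := exists_ecc (G := T) x
    rw [hu]
    exact hdmax x u
  have hd4 : 4 ≤ T.dist a b := by
    by_contra h
    push_neg at h
    rcases Nat.even_or_odd (T.dist a b) with ⟨r1, hr⟩ | ⟨r1, hr⟩
    · obtain ⟨hE1, hE2⟩ := even_geom hT hWlen (by omega : T.dist a b = 2*r1)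
      have hdom : ∀ x : Fin n, x ∈ ({W.getVert r1} : Set (Fin n)) ∨
          ∃ y ∈ ({W.getVert r1} : Set (Fin n)), T.Adj x y := by
        intro x
        rcases hE2 x (by have := heccd x; omega) with h' | h'
        · exact Or.inl h'
        · exact Or.inr ⟨_, rfl, h'.symm⟩
      have hle := domNum_le_card _ hdom
      rw [hd, Set.ncard_singleton] at hle
      omega
    · obtain ⟨hO1, hO2⟩ := odd_geom hT hWlen (by omega : T.dist a b = 2*r1 + 1)
      have hdom : ∀ x : Fin n, x ∈ ({W.getVert r1, W.getVert (r1+1)} : Set (Fin n)) ∨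
          ∃ y ∈ ({W.getVert r1, W.getVert (r1+1)} : Set (Fin n)), T.Adj x y := by
        intro x
        rcases hO2 x (by have := heccd x; omega) with (h' | h') | (h' | h')
        · exact Or.inl (Or.inl h')
        · exact Or.inl (Or.inr h')
        · exact Or.inr ⟨_, Or.inl rfl, h'.symm⟩
        · exact Or.inr ⟨_, Or.inr rfl, h'.symm⟩
      have hle := domNum_le_card _ hdom
      rw [hd] at hle
      have h2 : ({W.getVert r1, W.getVert (r1+1)} : Set (Fin n)).ncard ≤ 2 := by
        have h3 := Set.ncard_insert_le (W.getVert r1) ({W.getVert (r1+1)} : Set (Fin n))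
        rw [Set.ncard_singleton] at h3
        omega
      omega
  rcases Nat.even_or_odd (T.dist a b) with ⟨r1, hr⟩ | ⟨r1, hr⟩
  · have hr1 : 2 ≤ r1 := by omega
    obtain ⟨h1, h2⟩ := even_case hg hr1 hT hd hWlen (by omega) hdmax
    exact ⟨h1, ⟨h2, fun hψ => hψ.elim (fun φ => backward hg hT hd φ)⟩⟩
  · have hr1 : 2 ≤ r1 := by omega
    have h1 := odd_case hg hr1 hT hd hWlen (by omega) hdmax
    exact ⟨le_of_lt h1, ⟨fun h' => absurd h' (ne_of_lt h1),
      fun hψ => absurd (hψ.elim (fun φ => backward hg hT hd φ)) (ne_of_lt h1)⟩⟩
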